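/- For H ∈ (0,1/2) and any u < 0, lim_{ε→0⁺} [ 2(H−1/2) ∫_u^0 e^{2s/T}(s−u+ε)^{2H−2} ds + ε^{2H−1} e^{2u/T} ] = (−u)^{2H−1} − (2/T) ∫_u^0 e^{2s/T}(s−u)^{2H−1} ds. -/

import Mathlib

open MeasureTheory Real Filter

theorem K_regularization_limit (H T u : ℝ) (hH : H ∈ Set.Ioo (0 : ℝ) (1/2))
    (hT : 0 < T) (hu : u < 0) :
    Tendsto (fun ε : ℝ =>
        2 * (H - 1/2) * (∫ s in u..0, Real.exp (2*s/T) * (s - u + ε) ^ (2*H - 2)) +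
          ε ^ (2*H - 1) * Real.exp (2*u/T))
      (nhdsWithin 0 (Set.Ioi 0))
      (nhds ((-u) ^ (2*H - 1) -
        (2/T) * ∫ s in u..0, Real.exp (2*s/T) * (s - u) ^ (2*H - 1))) := by
  obtain ⟨hH0, hH1⟩ := hH
  have hexp_neg : 2*H - 1 < 0 := by linarith
  have hexp_gt : (-1 : ℝ) < 2*H - 1 := by linarith
  -- Step 1: the identity for ε > 0, via integration by parts
  have key : ∀ ε : ℝ, 0 < ε →
      2 * (H - 1/2) * (∫ s in u..0, Real.exp (2*s/T) * (s - u + ε) ^ (2*H - 2)) +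
        ε ^ (2*H - 1) * Real.exp (2*u/T)
      = (ε - u) ^ (2*H - 1) -
        (2/T) * ∫ s in u..0, Real.exp (2*s/T) * (s - u + ε) ^ (2*H - 1) := by
    intro ε hε
    have hpos : ∀ s ∈ Set.uIcc u 0, 0 < s - u + ε := by
      intro s hs
      rw [Set.uIcc_of_le hu.le] at hs
      have := hs.1
      linarith
    have hderiv_exp : ∀ s : ℝ, HasDerivAt (fun s => Real.exp (2*s/T))
        (2/T * Real.exp (2*s/T)) s := by
      intro s
      have h1 : HasDerivAt (fun s : ℝ => 2*s/T) (2/T) s := by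
        simpa using ((hasDerivAt_id s).const_mul 2).div_const T
      simpa [mul_comm] using h1.exp
    have hderiv_v : ∀ s ∈ Set.uIcc u 0, HasDerivAt (fun s => (s - u + ε) ^ (2*H - 1))
        ((2*H - 1) * (s - u + ε) ^ (2*H - 2)) s := by
      intro s hs
      have h1 : HasDerivAt (fun s : ℝ => s - u + ε) 1 s := by
        simpa using ((hasDerivAt_id s).sub_const u).add_const ε
      have h2 := h1.rpow_const (p := 2*H - 1) (Or.inl (ne_of_gt (hpos s hs)))
      have : (2*H - 1 - 1) = 2*H - 2 := by ring
      rw [this] at h2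
      simpa using h2
    have hcont_v' : ContinuousOn (fun s => (2*H - 1) * (s - u + ε) ^ (2*H - 2))
        (Set.uIcc u 0) :=
      continuousOn_const.mul
        ((((continuousOn_id).sub continuousOn_const).add continuousOn_const).rpow_const
          (fun s hs => Or.inl (ne_of_gt (hpos s hs))))
    have IBP := intervalIntegral.integral_mul_deriv_eq_deriv_mul
      (fun s _ => hderiv_exp s) hderiv_v
      ((by fun_prop : Continuous fun s : ℝ => 2/T * Real.exp (2*s/T)).intervalIntegrable u 0)
      hcont_v'.intervalIntegrable
    have e1 : (∫ s in u..0, Real.exp (2*s/T) * ((2*H - 1) * (s - u + ε) ^ (2*H - 2)))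
        = (2*H - 1) * ∫ s in u..0, Real.exp (2*s/T) * (s - u + ε) ^ (2*H - 2) := by
      rw [← intervalIntegral.integral_const_mul]
      congr 1; funext s; ring
    have e2 : (∫ s in u..0, (2/T * Real.exp (2*s/T)) * (s - u + ε) ^ (2*H - 1))
        = (2/T) * ∫ s in u..0, Real.exp (2*s/T) * (s - u + ε) ^ (2*H - 1) := by
      rw [← intervalIntegral.integral_const_mul]
      congr 1; funext s; ring
    rw [e1, e2] at IBP
    have h0 : (0 : ℝ) - u + ε = ε - u := by ring
    have h1 : u - u + ε = ε := by ring
    simp only [h0, h1, mul_zero, zero_div, Real.exp_zero, one_mul] at IBP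
    have h2 : 2 * (H - 1/2) = 2*H - 1 := by ring
    rw [h2]
    linarith [IBP]
  -- Step 2: limits of the two terms
  have lim1 : Tendsto (fun ε : ℝ => (ε - u) ^ (2*H - 1)) (nhdsWithin 0 (Set.Ioi 0))
      (nhds ((-u) ^ (2*H - 1))) := by
    have hc : ContinuousAt (fun ε : ℝ => (ε - u) ^ (2*H - 1)) 0 := by
      apply ContinuousAt.rpow_const
      · exact (continuousAt_id.sub continuousAt_const)
      · left
        simp only [id_eq, zero_sub, ne_eq, neg_eq_zero]
        exact hu.ne
    have := hc.tendsto
    simp only [zero_sub] at this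
    exact this.mono_left nhdsWithin_le_nhds
  have lim2 : Tendsto (fun ε : ℝ => ∫ s in u..0, Real.exp (2*s/T) * (s - u + ε) ^ (2*H - 1))
      (nhdsWithin 0 (Set.Ioi 0))
      (nhds (∫ s in u..0, Real.exp (2*s/T) * (s - u) ^ (2*H - 1))) := by
    have hbound_int : IntervalIntegrable (fun s => (s - u) ^ (2*H - 1)) volume u 0 := by
      have := (intervalIntegral.intervalIntegrable_rpow' (a := 0) (b := -u)
        hexp_gt).comp_sub_right u
      simpa using this
    apply intervalIntegral.tendsto_integral_filter_of_dominated_convergence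
      (bound := fun s => (s - u) ^ (2*H - 1))
    · filter_upwards [self_mem_nhdsWithin] with ε hε
      apply Measurable.aestronglyMeasurable
      exact (Real.measurable_exp.comp ((measurable_id.const_mul 2).div_const T)).mul
        (by measurability)
    · filter_upwards [self_mem_nhdsWithin] with ε hε
      filter_upwards with s hs
      rw [Set.uIoc_of_le hu.le] at hs
      have hs1 : 0 < s - u := by linarith [hs.1]
      have h1 : Real.exp (2*s/T) ≤ 1 := by
        rw [Real.exp_le_one_iff]
        apply div_nonpos_of_nonpos_of_nonneg
        · linarith [hs.2]
        · exact hT.le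
      have hε' : 0 < ε := hε
      have h2 : (s - u + ε) ^ (2*H - 1) ≤ (s - u) ^ (2*H - 1) :=
        Real.rpow_le_rpow_of_nonpos hs1 (by linarith) hexp_neg.le
      have h3 : 0 ≤ (s - u + ε) ^ (2*H - 1) := Real.rpow_nonneg (by linarith) _
      rw [Real.norm_eq_abs, abs_of_nonneg (mul_nonneg (Real.exp_pos _).le h3)]
      calc Real.exp (2*s/T) * (s - u + ε) ^ (2*H - 1)
          ≤ 1 * (s - u) ^ (2*H - 1) := mul_le_mul h1 h2 h3 zero_le_one
        _ = (s - u) ^ (2*H - 1) := one_mul _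
    · exact hbound_int
    · filter_upwards with s hs
      rw [Set.uIoc_of_le hu.le] at hs
      have hs1 : 0 < s - u := by linarith [hs.1]
      have hc : ContinuousAt (fun ε : ℝ => Real.exp (2*s/T) * (s - u + ε) ^ (2*H - 1)) 0 := by
        apply ContinuousAt.mul continuousAt_const
        apply ContinuousAt.rpow_const (continuousAt_const.add continuousAt_id)
        left
        simp only [Pi.add_apply, id_eq, add_zero]
        exact hs1.ne'
      have hcl := hc.tendsto
      simp only [add_zero] at hcl
      exact hcl.mono_left nhdsWithin_le_nhds
  -- Conclude
  have final := lim1.sub (lim2.const_mul (2/T))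
  apply final.congr'
  filter_upwards [self_mem_nhdsWithin] with ε hε
  exact (key ε hε).symm
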